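/- Let 𝒟 be a 2-(v,k,λ) design with 2 ≤ k in which every point lies in exactly r blocks, with gcd(r,λ) = 1, and let G be an automorphism group of 𝒟 whose action on the point set 𝒫 is 2-transitive. Then G is flag-transitive. -/
import Mathlib

open Pointwise

lemma stab_trans_aux {P : Type*} [Fintype P] [DecidableEq P]
    (r k lam : ℕ) (𝓑 : Finset (Finset P))
    (hk : ∀ B ∈ 𝓑, B.card = k)
    (hk2 : 2 ≤ k)
    (hlam : ∀ x y : P, x ≠ y → (𝓑.filter (fun B => x ∈ B ∧ y ∈ B)).card = lam)
    (hr : ∀ x : P, (𝓑.filter (fun B => x ∈ B)).card = r)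
    (hcop : Nat.gcd r lam = 1)
    {G : Type*} [Group G] [MulAction G P]
    (hG : ∀ (g : G), ∀ B ∈ 𝓑, g • B ∈ 𝓑)
    (h2trans : ∀ a b c d : P, a ≠ b → c ≠ d → ∃ g : G, g • a = c ∧ g • b = d)
    (α : P) (B₁ B₂ : Finset P) (hB₁ : B₁ ∈ 𝓑) (hB₂ : B₂ ∈ 𝓑)
    (hα₁ : α ∈ B₁) (hα₂ : α ∈ B₂) :
    ∃ g : G, g • α = α ∧ g • B₁ = B₂ := by
  classical
  set S : Finset (Finset P) := 𝓑.filter (fun B => α ∈ B) with hSdef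
  set O : Finset (Finset P) := S.filter (fun B => ∃ g : G, g • α = α ∧ g • B₁ = B) with hOdef
  have hOS : O ⊆ S := Finset.filter_subset _ _
  have hS𝓑 : ∀ B ∈ S, B ∈ 𝓑 ∧ α ∈ B := by
    intro B hB; simpa [hSdef, Finset.mem_filter] using hB
  -- closure of O under stabilizer elements
  have hclose : ∀ g : G, g • α = α → ∀ B ∈ O, g • B ∈ O := by
    intro g hg B hB
    simp only [hOdef, hSdef, Finset.mem_filter] at hB ⊢
    obtain ⟨⟨hB𝓑, hαB⟩, h, hhα, hhB⟩ := hB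
    refine ⟨⟨hG g B hB𝓑, ?_⟩, g * h, ?_, ?_⟩
    · rw [← hg]; exact Finset.smul_mem_smul_finset hαB
    · rw [mul_smul, hhα, hg]
    · rw [mul_smul, hhB]
  -- m is constant on points ≠ α
  set m : P → ℕ := fun β => (O.filter (fun B => β ∈ B)).card with hmdef
  have hm : ∀ β γ : P, β ≠ α → γ ≠ α → m β = m γ := by
    intro β γ hβ hγ
    obtain ⟨g, hgα, hgβ⟩ := h2trans α β α γ (Ne.symm hβ) (Ne.symm hγ)
    have hginv : g⁻¹ • α = α := by nth_rewrite 1 [← hgα]; rw [inv_smul_smul]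
    apply Finset.card_bij (fun B _ => g • B)
    · intro B hB
      simp only [Finset.mem_filter] at hB ⊢
      exact ⟨hclose g hgα B hB.1, by
        rw [← hgβ]; exact Finset.smul_mem_smul_finset hB.2⟩
    · intro B hB C hC h
      have := congrArg (fun T => g⁻¹ • T) h
      simpa [inv_smul_smul] using this
    · intro C hC
      refine ⟨g⁻¹ • C, ?_, by rw [smul_inv_smul]⟩
      simp only [Finset.mem_filter] at hC ⊢
      refine ⟨hclose g⁻¹ hginv C hC.1, ?_⟩
      have : g⁻¹ • γ ∈ g⁻¹ • C := Finset.smul_mem_smul_finset hC.2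
      rwa [← hgβ, inv_smul_smul] at this
  -- double counting lemma
  have count1 : ∀ T : Finset (Finset P), T ⊆ S →
      ∑ β ∈ Finset.univ.erase α, (T.filter (fun B => β ∈ B)).card = T.card * (k - 1) := by
    intro T hT
    calc ∑ β ∈ Finset.univ.erase α, (T.filter (fun B => β ∈ B)).card
        = ∑ β ∈ Finset.univ.erase α, ∑ B ∈ T, if β ∈ B then 1 else 0 := by
          simp only [Finset.card_filter]
      _ = ∑ B ∈ T, ∑ β ∈ Finset.univ.erase α, if β ∈ B then 1 else 0 := Finset.sum_comm
      _ = ∑ B ∈ T, (B.erase α).card := by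
          refine Finset.sum_congr rfl fun B hB => ?_
          rw [← Finset.card_filter]
          congr 1
          ext β
          simp only [Finset.mem_filter, Finset.mem_erase, Finset.mem_univ, true_and, and_true]
          try tauto
      _ = ∑ B ∈ T, (k - 1) := by
          refine Finset.sum_congr rfl fun B hB => ?_
          obtain ⟨hB𝓑, hαB⟩ := hS𝓑 B (hT hB)
          rw [Finset.card_erase_of_mem hαB, hk B hB𝓑]
      _ = T.card * (k - 1) := by rw [Finset.sum_const, smul_eq_mul]
  -- there is a point distinct from α
  have hcard2 : 1 < Fintype.card P := by
    have h1 : k ≤ Fintype.card P := by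
      rw [← hk B₁ hB₁, ← Finset.card_univ]
      exact Finset.card_le_univ _
    omega
  obtain ⟨β₀, hβ₀⟩ := Fintype.exists_ne_of_one_lt_card hcard2 α
  have herase : (Finset.univ.erase α).card = Fintype.card P - 1 := by
    rw [Finset.card_erase_of_mem (Finset.mem_univ _), Finset.card_univ]
  -- sum over S
  have hSsum : (Fintype.card P - 1) * lam = S.card * (k - 1) := by
    calc (Fintype.card P - 1) * lam
        = ∑ _β ∈ Finset.univ.erase α, lam := by
          rw [Finset.sum_const, herase, smul_eq_mul]
      _ = ∑ β ∈ Finset.univ.erase α, (S.filter (fun B => β ∈ B)).card := by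
          refine Finset.sum_congr rfl fun β hβ => ?_
          have hne : α ≠ β := fun h => (Finset.mem_erase.mp hβ).1 h.symm
          rw [hSdef, Finset.filter_filter]
          exact (hlam α β hne).symm
      _ = S.card * (k - 1) := count1 S Finset.Subset.rfl
  -- sum over O
  have hOsum : (Fintype.card P - 1) * m β₀ = O.card * (k - 1) := by
    calc (Fintype.card P - 1) * m β₀
        = ∑ _β ∈ Finset.univ.erase α, m β₀ := by
          rw [Finset.sum_const, herase, smul_eq_mul]
      _ = ∑ β ∈ Finset.univ.erase α, (O.filter (fun B => β ∈ B)).card := by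
          refine Finset.sum_congr rfl fun β hβ => ?_
          exact hm β₀ β hβ₀ (Finset.mem_erase.mp hβ).1
      _ = O.card * (k - 1) := count1 O hOS
  have hScard : S.card = r := hr α
  have hB₁O : B₁ ∈ O := by
    rw [hOdef, Finset.mem_filter]
    exact ⟨Finset.mem_filter.mpr ⟨hB₁, hα₁⟩, 1, one_smul _ _, one_smul _ _⟩
  have hOpos : 0 < O.card := Finset.card_pos.mpr ⟨B₁, hB₁O⟩
  have hOle : O.card ≤ r := hScard ▸ Finset.card_le_card hOS
  -- derive O.card * lam = r * m β₀
  have hkey : O.card * lam = r * m β₀ := by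
    have hvpos : 0 < Fintype.card P - 1 := by omega
    have h1 : (Fintype.card P - 1) * (O.card * lam) = (Fintype.card P - 1) * (r * m β₀) := by
      calc (Fintype.card P - 1) * (O.card * lam)
          = O.card * ((Fintype.card P - 1) * lam) := by ring
        _ = O.card * (S.card * (k - 1)) := by rw [hSsum]
        _ = S.card * (O.card * (k - 1)) := by ring
        _ = S.card * ((Fintype.card P - 1) * m β₀) := by rw [hOsum]
        _ = (Fintype.card P - 1) * (r * m β₀) := by rw [hScard]; ring
    exact Nat.eq_of_mul_eq_mul_left hvpos h1
  have hrdvd : r ∣ O.card := by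
    have h1 : r ∣ O.card * lam := ⟨m β₀, hkey⟩
    exact (Nat.Coprime.dvd_of_dvd_mul_right hcop h1)
  have hOr : O.card = r := le_antisymm hOle (Nat.le_of_dvd hOpos hrdvd)
  have hOeqS : O = S := Finset.eq_of_subset_of_card_le hOS (by rw [hOr, hScard])
  have hB₂O : B₂ ∈ O := by
    rw [hOeqS, hSdef, Finset.mem_filter]; exact ⟨hB₂, hα₂⟩
  rw [hOdef, Finset.mem_filter] at hB₂O
  exact hB₂O.2

theorem stmt_9 {P : Type*} [Fintype P] [DecidableEq P]
    (v r k lam : ℕ) (𝓑 : Finset (Finset P))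
    (hv : Fintype.card P = v)
    (hk : ∀ B ∈ 𝓑, B.card = k)
    (hk2 : 2 ≤ k)
    (hlam1 : 1 ≤ lam)
    (hlam : ∀ x y : P, x ≠ y → (𝓑.filter (fun B => x ∈ B ∧ y ∈ B)).card = lam)
    (hr : ∀ x : P, (𝓑.filter (fun B => x ∈ B)).card = r)
    (hcop : Nat.gcd r lam = 1)
    {G : Type*} [Group G] [Finite G] [MulAction G P]
    (hG : ∀ (g : G), ∀ B ∈ 𝓑, g • B ∈ 𝓑)
    (h2trans : ∀ a b c d : P, a ≠ b → c ≠ d → ∃ g : G, g • a = c ∧ g • b = d) :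
    ∀ B₁ ∈ 𝓑, ∀ B₂ ∈ 𝓑, ∀ α₁ ∈ B₁, ∀ α₂ ∈ B₂,
      ∃ g : G, g • α₁ = α₂ ∧ g • B₁ = B₂ := by
  intro B₁ hB₁ B₂ hB₂ α₁ hα₁ α₂ hα₂
  have hcard2 : 1 < Fintype.card P := by
    have h1 : k ≤ Fintype.card P := by
      rw [← hk B₁ hB₁, ← Finset.card_univ]
      exact Finset.card_le_univ _
    omega
  obtain ⟨β₁, hβ₁⟩ := Fintype.exists_ne_of_one_lt_card hcard2 α₁
  obtain ⟨β₂, hβ₂⟩ := Fintype.exists_ne_of_one_lt_card hcard2 α₂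
  obtain ⟨g, hg₁, _⟩ := h2trans α₁ β₁ α₂ β₂ (Ne.symm hβ₁) (Ne.symm hβ₂)
  have hgB₁ : g • B₁ ∈ 𝓑 := hG g B₁ hB₁
  have hα₂gB₁ : α₂ ∈ g • B₁ := by rw [← hg₁]; exact Finset.smul_mem_smul_finset hα₁
  obtain ⟨h, hhα, hhB⟩ := stab_trans_aux r k lam 𝓑 hk hk2 hlam hr hcop hG h2trans
    α₂ (g • B₁) B₂ hgB₁ hB₂ hα₂gB₁ hα₂
  exact ⟨h * g, by rw [mul_smul, hg₁, hhα], by rw [mul_smul, hhB]⟩
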